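/- Let R be a commutative ring and let E be a GV-torsion-free injective R-module (equivalently, an injective w-module). Then the following are equivalent: (1) Hom_R(A, E) ≠ 0 for every nonzero w-module A; (2) Hom_R(B, E) ≠ 0 for every nonzero GV-torsion-free R-module B; (3) Hom_R(R/I, E) ≠ 0 for every proper w-ideal I of R; (4) Hom_R(R/m, E) ≠ 0 for every m ∈ w-Max(R). -/

import Mathlib

universe u v

section WDefs

variable (R : Type u) [CommRing R]

/-- The canonical `R`-linear map `R → Hom_R(J, R)`, `r ↦ (j ↦ r * j)`. -/
def gvCanonicalMap (J : Ideal R) : R →ₗ[R] (J →ₗ[R] R) where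
  toFun r := r • (J.subtype)
  map_add' x y := add_smul x y _
  map_smul' r x := by simp [mul_smul]

/-- A finitely generated ideal `J` of `R` is a GV-ideal (Glaz–Vasconcelos ideal)
if the canonical map `R → Hom_R(J, R)` is an isomorphism. -/
def IsGVIdeal (J : Ideal R) : Prop :=
  J.FG ∧ Function.Bijective (gvCanonicalMap R J)

/-- An ideal `I` of `R` is a w-ideal if whenever `J x ⊆ I` for some GV-ideal `J`,
then `x ∈ I`. -/
def IsWIdeal (I : Ideal R) : Prop :=
  ∀ x : R, (∃ J : Ideal R, IsGVIdeal R J ∧ ∀ j ∈ J, j * x ∈ I) → x ∈ I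

/-- `m` is a maximal w-ideal: maximal among the proper w-ideals of `R`. -/
def IsMaxWIdeal (m : Ideal R) : Prop :=
  IsWIdeal R m ∧ m ≠ ⊤ ∧ ∀ I : Ideal R, IsWIdeal R I → I ≠ ⊤ → m ≤ I → I = m

variable {M : Type v} [AddCommGroup M] [Module R M]

/-- `x` is a GV-torsion element if it is killed by some GV-ideal. -/
def IsGVTorsionElem (x : M) : Prop :=
  ∃ J : Ideal R, IsGVIdeal R J ∧ ∀ j ∈ J, j • x = 0

variable (M)

/-- `M` is GV-torsion-free if it has no nonzero GV-torsion element. -/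
def IsGVTorsionFree : Prop := ∀ x : M, IsGVTorsionElem R x → x = 0

/-- `M` is GV-torsion if all its elements are GV-torsion. -/
def IsGVTorsion : Prop := ∀ x : M, IsGVTorsionElem R x

/-- `M` is a w-module: GV-torsion-free and every map from a GV-ideal to `M`
extends to `R`. -/
def IsWModule : Prop :=
  IsGVTorsionFree R M ∧
    ∀ J : Ideal R, IsGVIdeal R J → ∀ f : J →ₗ[R] M,
      ∃ g : R →ₗ[R] M, ∀ x : J, g (x : R) = f x

end WDefs


section Helpers
variable {R : Type u} [CommRing R]

theorem gv_eq_zero {J : Ideal R} (hJ : IsGVIdeal R J) {r : R}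
    (h : ∀ j ∈ J, r * j = 0) : r = 0 := by
  apply hJ.2.1
  ext j
  simp only [gvCanonicalMap, LinearMap.coe_mk, AddHom.coe_mk, LinearMap.smul_apply,
    Submodule.coe_subtype, smul_eq_mul, map_zero, LinearMap.zero_apply]
  exact h j j.2

theorem gv_exists_mul_eq {J : Ideal R} (hJ : IsGVIdeal R J) (f : J →ₗ[R] R) :
    ∃ r : R, ∀ j : J, r * (j : R) = f j := by
  obtain ⟨r, hr⟩ := hJ.2.2 f
  refine ⟨r, fun j => ?_⟩
  have := congrFun (congrArg DFunLike.coe hr) j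
  simpa [gvCanonicalMap, smul_eq_mul] using this

theorem isGVIdeal_top : IsGVIdeal R (⊤ : Ideal R) := by
  constructor
  · exact ⟨{1}, by simp [Ideal.span_singleton_one]⟩
  constructor
  · intro a b hab
    have := congrFun (congrArg DFunLike.coe hab) ⟨1, trivial⟩
    simpa [gvCanonicalMap, smul_eq_mul] using this
  · intro f
    refine ⟨f ⟨1, trivial⟩, ?_⟩
    ext j
    have : (j : R) • (⟨1, trivial⟩ : (⊤ : Ideal R)) = j := by
      ext; simp
    simp only [gvCanonicalMap, LinearMap.coe_mk, AddHom.coe_mk, LinearMap.smul_apply,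
      Submodule.coe_subtype, smul_eq_mul]
    conv_rhs => rw [← this, map_smul]
    simp [smul_eq_mul, mul_comm]

theorem IsGVIdeal.mul {J K : Ideal R} (hJ : IsGVIdeal R J) (hK : IsGVIdeal R K) :
    IsGVIdeal R (J * K) := by
  refine ⟨Submodule.FG.mul hJ.1 hK.1, ?_, ?_⟩
  · intro a b hab
    have key : ∀ x ∈ J * K, a * x = b * x := by
      intro x hx
      have := congrFun (congrArg DFunLike.coe hab) ⟨x, hx⟩
      simpa [gvCanonicalMap, smul_eq_mul] using this
    have h1 : a - b = 0 := by
      apply gv_eq_zero hJ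
      intro j hj
      apply gv_eq_zero hK
      intro k hk
      have := key (j * k) (Ideal.mul_mem_mul hj hk)
      linear_combination this
    exact sub_eq_zero.mp h1
  · intro f
    have mkmem : ∀ (a : J) (k : K), (a : R) * (k : R) ∈ J * K :=
      fun a k => Ideal.mul_mem_mul a.2 k.2
    have uniq : ∀ r r' : R, (∀ k : K, r * (k : R) = r' * (k : R)) → r = r' := by
      intro r r' h
      have : r - r' = 0 := by
        apply gv_eq_zero hK
        intro k hk
        have := h ⟨k, hk⟩
        linear_combination this
      exact sub_eq_zero.mp this
    have hfa : ∀ a : J, ∃ r : R, ∀ k : K, r * (k : R) = f ⟨(a : R) * k, mkmem a k⟩ := by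
      intro a
      refine gv_exists_mul_eq hK
        { toFun := fun k => f ⟨(a : R) * k, mkmem a k⟩
          map_add' := by
            intro k k'
            rw [← map_add]
            exact congrArg f (Subtype.ext (by push_cast; ring))
          map_smul' := by
            intro c k
            simp only [RingHom.id_apply]
            rw [← map_smul]
            exact congrArg f (Subtype.ext (by
              simp only [SetLike.val_smul, smul_eq_mul]; ring)) }
    choose ra hra using hfa
    obtain ⟨r, hr⟩ := gv_exists_mul_eq hJ
      { toFun := ra
        map_add' := by
          intro a a'
          apply uniq
          intro k
          rw [hra (a + a') k, add_mul, hra a k, hra a' k, ← map_add]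
          exact congrArg f (Subtype.ext (by push_cast; ring))
        map_smul' := by
          intro c a
          apply uniq
          intro k
          rw [hra (c • a) k]
          simp only [RingHom.id_apply, smul_eq_mul]
          rw [mul_assoc, hra a k]
          have heq : (⟨(↑(c • a) : R) * ↑k, mkmem (c • a) k⟩ : ↥(J * K))
              = c • ⟨(↑a : R) * ↑k, mkmem a k⟩ := Subtype.ext (by
            simp only [SetLike.val_smul, smul_eq_mul]; ring)
          rw [heq, map_smul, smul_eq_mul] }
    refine ⟨r, ?_⟩
    ext x
    simp only [gvCanonicalMap, LinearMap.coe_mk, AddHom.coe_mk, LinearMap.smul_apply,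
      Submodule.coe_subtype, smul_eq_mul]
    obtain ⟨x, hx⟩ := x
    refine Submodule.mul_induction_on' (C := fun y hy => r * y = f ⟨y, hy⟩) ?_ ?_ hx
    · intro m hm n hn
      have h1 : r * m = ra ⟨m, hm⟩ := by
        have := hr ⟨m, hm⟩
        simpa using this
      have h2 := hra ⟨m, hm⟩ ⟨n, hn⟩
      calc r * (m * n) = (r * m) * n := by ring
        _ = ra ⟨m, hm⟩ * n := by rw [h1]
        _ = f ⟨m * n, _⟩ := h2
    · intro y hy z hz hy' hz'
      have : (⟨y, hy⟩ : ↥(J * K)) + ⟨z, hz⟩ = ⟨y + z, Submodule.add_mem _ hy hz⟩ := rfl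
      rw [mul_add, hy', hz', ← map_add, this]

theorem isGVIdeal_finset_prod {ι : Type*} (s : Finset ι) (K : ι → Ideal R)
    (h : ∀ i ∈ s, IsGVIdeal R (K i)) : IsGVIdeal R (∏ i ∈ s, K i) := by
  classical
  induction s using Finset.induction_on with
  | empty => simpa [Ideal.one_eq_top] using isGVIdeal_top
  | @insert _ _ hni ih =>
    rw [Finset.prod_insert hni]
    exact IsGVIdeal.mul (h _ (Finset.mem_insert_self _ _))
      (ih fun i hi => h i (Finset.mem_insert_of_mem hi))

theorem finset_prod_le {ι : Type*} {s : Finset ι} (K : ι → Ideal R) {i : ι} (hi : i ∈ s) :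
    (∏ j ∈ s, K j) ≤ K i :=
  le_trans Ideal.prod_le_inf (Finset.inf_le hi)
end Helpers

section Helpers2
variable {R : Type u} [CommRing R]

theorem span_smul_mem {M : Type v} [AddCommGroup M] [Module R M] {s : Set R} {x : M}
    {S : Submodule R M} (h : ∀ a ∈ s, a • x ∈ S) : ∀ j ∈ Ideal.span s, j • x ∈ S := by
  intro j hj
  have hle : Ideal.span s ≤ S.comap (LinearMap.toSpanSingleton R M x) :=
    Ideal.span_le.mpr fun a ha => by
      simpa [LinearMap.toSpanSingleton_apply] using h a ha
  simpa [LinearMap.toSpanSingleton_apply] using hle hj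

theorem exists_isMaxWIdeal_ge {I₀ : Ideal R} (hw : IsWIdeal R I₀) (hne : I₀ ≠ ⊤) :
    ∃ m : Ideal R, IsMaxWIdeal R m ∧ I₀ ≤ m := by
  classical
  set s : Set (Ideal R) := {I | IsWIdeal R I ∧ I ≠ ⊤} with hs
  have hzorn : ∀ c ⊆ s, IsChain (· ≤ ·) c → ∀ y ∈ c, ∃ ub ∈ s, ∀ z ∈ c, z ≤ ub := by
    intro c hcs hchain y hy
    have hcne : c.Nonempty := ⟨y, hy⟩
    have hdir : DirectedOn (· ≤ ·) c := hchain.directedOn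
    have hmem : ∀ z : R, z ∈ sSup c ↔ ∃ I ∈ c, z ∈ I := fun z =>
      Submodule.mem_sSup_of_directed hcne hdir
    refine ⟨sSup c, ⟨?_, ?_⟩, fun z hz => le_sSup hz⟩
    · intro x ⟨J, hJ, hmul⟩
      obtain ⟨sJ, hsJ⟩ := hJ.1
      have key : ∀ t : Finset R, (∀ a ∈ t, a ∈ J) → ∃ I ∈ c, ∀ a ∈ t, a * x ∈ I := by
        intro t
        induction t using Finset.induction_on with
        | empty => exact fun _ => ⟨y, hy, by simp⟩
        | @insert a t hat ih =>
          intro hmemJ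
          obtain ⟨I₁, hI₁c, hI₁⟩ := ih fun b hb => hmemJ b (Finset.mem_insert_of_mem hb)
          have hax : a * x ∈ sSup c := hmul a (hmemJ a (Finset.mem_insert_self a t))
          obtain ⟨I₂, hI₂c, hI₂⟩ := (hmem (a * x)).mp hax
          rcases hchain.total hI₁c hI₂c with h12 | h21
          · refine ⟨I₂, hI₂c, fun b hb => ?_⟩
            rcases Finset.mem_insert.mp hb with rfl | hb
            · exact hI₂
            · exact h12 (hI₁ b hb)
          · refine ⟨I₁, hI₁c, fun b hb => ?_⟩
            rcases Finset.mem_insert.mp hb with rfl | hb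
            · exact h21 hI₂
            · exact hI₁ b hb
      obtain ⟨I, hIc, hI⟩ := key sJ fun a ha => by rw [← hsJ]; exact Ideal.subset_span ha
      have hallJ : ∀ j ∈ J, j * x ∈ I := by
        rw [← hsJ]
        intro j hj
        refine Submodule.span_induction ?_ ?_ ?_ ?_ hj
        · intro a ha
          exact hI a ha
        · simp
        · intro p q _ _ hp hq
          rw [add_mul]; exact I.add_mem hp hq
        · intro r p _ hp
          rw [smul_eq_mul, mul_assoc]
          exact I.smul_mem r hp
      exact le_sSup hIc ((hcs hIc).1 x ⟨J, hJ, hallJ⟩)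
    · intro htop
      have h1 : (1 : R) ∈ sSup c := htop ▸ Submodule.mem_top
      obtain ⟨I, hIc, hI⟩ := (hmem 1).mp h1
      exact (hcs hIc).2 (Ideal.eq_top_iff_one I |>.mpr hI)
  obtain ⟨m, hIm, hmax⟩ := zorn_le_nonempty₀ s hzorn I₀ ⟨hw, hne⟩
  exact ⟨m, ⟨hmax.prop.1, hmax.prop.2, fun I hIw hInet hmI =>
    le_antisymm (hmax.le_of_ge ⟨hIw, hInet⟩ hmI) hmI⟩, hIm⟩

end Helpers2

section Helpers3
variable {R : Type u} [CommRing R]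

theorem isWIdeal_ann {B : Type v} [AddCommGroup B] [Module R B]
    (hB : IsGVTorsionFree R B) (b : B) :
    IsWIdeal R (LinearMap.ker (LinearMap.toSpanSingleton R B b)) := by
  intro x ⟨J, hJ, h⟩
  have hx : x • b = 0 := by
    refine hB _ ⟨J, hJ, fun j hj => ?_⟩
    have h2 : (j * x) • b = 0 := by
      simpa [LinearMap.toSpanSingleton_apply] using h j hj
    rw [smul_smul, h2]
  simpa [LinearMap.mem_ker, LinearMap.toSpanSingleton_apply] using hx

theorem exists_hom_of_maxW {E : Type u} [AddCommGroup E] [Module R E]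
    (hinj : Module.Injective R E)
    (h4 : ∀ m : Ideal R, IsMaxWIdeal R m → ∃ f : (R ⧸ m) →ₗ[R] E, f ≠ 0)
    (B : Type u) [AddCommGroup B] [Module R B] (hB : IsGVTorsionFree R B)
    (hnt : Nontrivial B) :
    ∃ f : B →ₗ[R] E, f ≠ 0 := by
  obtain ⟨b, hb⟩ := exists_ne (0 : B)
  set ψ := LinearMap.toSpanSingleton R B b with hψ
  have hker_w : IsWIdeal R (LinearMap.ker ψ) := isWIdeal_ann hB b
  have hker_ne : LinearMap.ker ψ ≠ ⊤ := by
    intro h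
    have h1 : (1 : R) ∈ LinearMap.ker ψ := h ▸ Submodule.mem_top
    simp [LinearMap.mem_ker, LinearMap.toSpanSingleton_apply, hψ] at h1
    exact hb h1
  obtain ⟨m, hm, hlem⟩ := exists_isMaxWIdeal_ge hker_w hker_ne
  obtain ⟨f, hf⟩ := h4 m hm
  have he : f (Submodule.Quotient.mk 1) ≠ 0 := by
    intro h0
    apply hf
    refine LinearMap.ext fun y => ?_
    obtain ⟨r, rfl⟩ := Submodule.Quotient.mk_surjective m y
    have hr : (Submodule.Quotient.mk r : R ⧸ m) = r • Submodule.Quotient.mk 1 := by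
      rw [← Submodule.Quotient.mk_smul]
      simp
    rw [hr, map_smul, h0, smul_zero, LinearMap.zero_apply]
  set φ : R →ₗ[R] E := f ∘ₗ m.mkQ with hφ
  have hle : LinearMap.ker ψ ≤ LinearMap.ker φ := by
    intro r hr
    have hrm : r ∈ m := hlem hr
    simp only [hφ, LinearMap.mem_ker, LinearMap.comp_apply, Submodule.mkQ_apply]
    rw [(Submodule.Quotient.mk_eq_zero m).mpr hrm, map_zero]
  set g : ↥(LinearMap.range ψ) →ₗ[R] E :=
    ((LinearMap.ker ψ).liftQ φ hle) ∘ₗ (ψ.quotKerEquivRange).symm.toLinearMap with hg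
  have hbmem : b ∈ LinearMap.range ψ := by
    refine ⟨1, ?_⟩
    rw [hψ, LinearMap.toSpanSingleton_apply, one_smul]
  have hgb : g ⟨b, hbmem⟩ = f (Submodule.Quotient.mk 1) := by
    have hb1 : (⟨b, hbmem⟩ : ↥(LinearMap.range ψ)) = ⟨ψ 1, LinearMap.mem_range_self ψ 1⟩ := by
      ext
      simp [hψ, LinearMap.toSpanSingleton_apply]
    rw [hg, LinearMap.comp_apply, hb1]
    rw [LinearEquiv.coe_toLinearMap, LinearMap.quotKerEquivRange_symm_apply_image,
      Submodule.mkQ_apply, Submodule.liftQ_apply, hφ, LinearMap.comp_apply,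
      Submodule.mkQ_apply]
  obtain ⟨F, hF⟩ := hinj.out (LinearMap.range ψ).subtype
    (Submodule.injective_subtype _) g
  refine ⟨F, fun h0 => he ?_⟩
  have hFb := hF ⟨b, hbmem⟩
  rw [h0, LinearMap.zero_apply] at hFb
  rw [← hgb, ← hFb]

end Helpers3

section Helpers4
variable {R : Type u} [CommRing R]

theorem quotient_gvtf {I : Ideal R} (hI : IsWIdeal R I) : IsGVTorsionFree R (R ⧸ I) := by
  intro x ⟨J, hJ, h⟩
  obtain ⟨r, rfl⟩ := Submodule.Quotient.mk_surjective I x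
  rw [Submodule.Quotient.mk_eq_zero]
  refine hI r ⟨J, hJ, fun j hj => ?_⟩
  have hz := h j hj
  rw [← Submodule.Quotient.mk_smul, Submodule.Quotient.mk_eq_zero] at hz
  simpa [smul_eq_mul] using hz

theorem exists_wEnvelope (R : Type u) [CommRing R] (B : Type u) [AddCommGroup B] [Module R B]
    (hB : IsGVTorsionFree R B) :
    ∃ (W : Type u) (_ : AddCommGroup W) (_ : Module R W) (i : B →ₗ[R] W),
      IsWModule R W ∧ Function.Injective i ∧
      ∀ w : W, ∃ J : Ideal R, IsGVIdeal R J ∧ ∀ j ∈ J, ∃ b : B, i b = j • w := by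
  classical
  -- ambient injective module
  let BM := ModuleCat.of R B
  let QM := CategoryTheory.Injective.under BM
  let Q : Type u := QM
  have hQinj : Module.Injective R Q :=
    Module.injective_module_of_injective_object R Q
      (inj := by rw [ModuleCat.of_coe]; infer_instance)
  let i₀ : B →ₗ[R] Q := (CategoryTheory.Injective.ι BM).hom
  have hi₀ : Function.Injective i₀ :=
    (ModuleCat.mono_iff_injective (CategoryTheory.Injective.ι BM)).mp inferInstance
  set B₀ : Submodule R Q := LinearMap.range i₀ with hB₀def
  -- torsion-freeness of B₀
  have hB₀tf : ∀ x ∈ B₀, IsGVTorsionElem R x → x = 0 := by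
    rintro x ⟨b, rfl⟩ ⟨J, hJ, h⟩
    have hb0 : b = 0 := by
      refine hB b ⟨J, hJ, fun j hj => hi₀ ?_⟩
      rw [map_smul, map_zero]
      exact h j hj
    rw [hb0, map_zero]
  -- Zorn: C maximal with C ⊓ B₀ = ⊥
  have zorn_chain : ∀ (P : Submodule R Q → Prop),
      (∀ (c : Set (Submodule R Q)), c.Nonempty → DirectedOn (· ≤ ·) c →
        (∀ z ∈ c, P z) → P (sSup c)) →
      ∀ c ⊆ {S | P S}, IsChain (· ≤ ·) c → ∀ y ∈ c, ∃ ub ∈ {S | P S}, ∀ z ∈ c, z ≤ ub := by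
    intro P hP c hcs hchain y hy
    exact ⟨sSup c, hP c ⟨y, hy⟩ hchain.directedOn hcs, fun z hz => le_sSup hz⟩
  obtain ⟨C, hCbot, hCmax⟩ := zorn_le_nonempty₀ {S : Submodule R Q | S ⊓ B₀ = ⊥}
    (zorn_chain _ (by
      intro c hcne hdir hall
      rw [eq_bot_iff]
      intro x hx
      obtain ⟨hx1, hx2⟩ := Submodule.mem_inf.mp hx
      obtain ⟨S, hSc, hxS⟩ := (Submodule.mem_sSup_of_directed hcne hdir).mp hx1
      have : x ∈ S ⊓ B₀ := Submodule.mem_inf.mpr ⟨hxS, hx2⟩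
      rw [hall S hSc] at this
      exact this)) ⊥ (by simp)
  clear hCbot
  have hCB₀ : C ⊓ B₀ = ⊥ := hCmax.prop
  -- Zorn: D maximal with D ⊓ C = ⊥ and B₀ ≤ D
  obtain ⟨D, hDge, hDmax⟩ := zorn_le_nonempty₀
    {S : Submodule R Q | S ⊓ C = ⊥ ∧ B₀ ≤ S}
    (zorn_chain _ (by
      intro c hcne hdir hall
      constructor
      · rw [eq_bot_iff]
        intro x hx
        obtain ⟨hx1, hx2⟩ := Submodule.mem_inf.mp hx
        obtain ⟨S, hSc, hxS⟩ := (Submodule.mem_sSup_of_directed hcne hdir).mp hx1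
        have : x ∈ S ⊓ C := Submodule.mem_inf.mpr ⟨hxS, hx2⟩
        rw [(hall S hSc).1] at this
        exact this
      · obtain ⟨S, hSc⟩ := hcne
        exact le_trans (hall S hSc).2 (le_sSup hSc)))
    B₀ (by
      constructor
      · rw [inf_comm]; exact hCB₀
      · exact le_rfl)
  have hDC : D ⊓ C = ⊥ := hDmax.prop.1
  have hB₀D : B₀ ≤ D := hDmax.prop.2
  clear hDge
  -- the projection p : C ⊔ D → Q onto C
  set C' : Submodule R ↥(C ⊔ D) := C.comap (C ⊔ D).subtype with hC'def
  set D' : Submodule R ↥(C ⊔ D) := D.comap (C ⊔ D).subtype with hD'def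
  have hcompl : IsCompl C' D' := by
    constructor
    · rw [disjoint_iff, eq_bot_iff]
      intro x hx
      obtain ⟨hx1, hx2⟩ := Submodule.mem_inf.mp hx
      have : (x : Q) ∈ D ⊓ C := Submodule.mem_inf.mpr ⟨hx2, hx1⟩
      rw [hDC] at this
      exact (Submodule.mk_eq_zero _ _).mpr ((Submodule.mem_bot R).mp this)
    · rw [codisjoint_iff, eq_top_iff]
      rintro ⟨x, hx⟩ -
      obtain ⟨c, hc, d, hd, rfl⟩ := Submodule.mem_sup.mp hx
      have hcm : c ∈ C ⊔ D := Submodule.mem_sup_left hc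
      have hdm : d ∈ C ⊔ D := Submodule.mem_sup_right hd
      have : (⟨c + d, hx⟩ : ↥(C ⊔ D)) = ⟨c, hcm⟩ + ⟨d, hdm⟩ := rfl
      rw [this]
      exact Submodule.add_mem _ (Submodule.mem_sup_left hc)
        (Submodule.mem_sup_right hd)
  set p : ↥(C ⊔ D) →ₗ[R] Q :=
    (C ⊔ D).subtype ∘ₗ C'.subtype ∘ₗ (Submodule.linearProjOfIsCompl C' D' hcompl)
    with hpdef
  have hpC : ∀ (c : Q) (hc : c ∈ C) (hm : c ∈ C ⊔ D), p ⟨c, hm⟩ = c := by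
    intro c hc hm
    have : Submodule.linearProjOfIsCompl C' D' hcompl ⟨c, hm⟩
        = ⟨⟨c, hm⟩, hc⟩ :=
      Submodule.linearProjOfIsCompl_apply_left hcompl ⟨⟨c, hm⟩, hc⟩
    rw [hpdef, LinearMap.comp_apply, LinearMap.comp_apply, this]
    rfl
  have hpD : ∀ (d : Q) (hd : d ∈ D) (hm : d ∈ C ⊔ D), p ⟨d, hm⟩ = 0 := by
    intro d hd hm
    have : Submodule.linearProjOfIsCompl C' D' hcompl ⟨d, hm⟩ = 0 :=
      Submodule.linearProjOfIsCompl_apply_right hcompl ⟨⟨d, hm⟩, hd⟩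
    rw [hpdef, LinearMap.comp_apply, LinearMap.comp_apply, this]
    rfl
  obtain ⟨eC, heC⟩ := hQinj.out (C ⊔ D).subtype (Submodule.injective_subtype _) p
  have heCC : ∀ c ∈ C, eC c = c := by
    intro c hc
    have hm : c ∈ C ⊔ D := Submodule.mem_sup_left hc
    have := heC ⟨c, hm⟩
    simpa [hpC c hc hm] using this
  have heCD : ∀ d ∈ D, eC d = 0 := by
    intro d hd
    have hm : d ∈ C ⊔ D := Submodule.mem_sup_right hd
    have := heC ⟨d, hm⟩
    simpa [hpD d hd hm] using this
  have hkerD : LinearMap.ker eC = D := by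
    refine le_antisymm ?_ (fun d hd => LinearMap.mem_ker.mpr (heCD d hd))
    have hK : LinearMap.ker eC ⊓ C = ⊥ ∧ B₀ ≤ LinearMap.ker eC := by
      constructor
      · rw [eq_bot_iff]
        intro x hx
        obtain ⟨hx1, hx2⟩ := Submodule.mem_inf.mp hx
        have h1 : eC x = 0 := LinearMap.mem_ker.mp hx1
        rw [heCC x hx2] at h1
        exact (Submodule.mem_bot R).mpr h1
      · exact fun b hb => LinearMap.mem_ker.mpr (heCD b (hB₀D hb))
    exact hDmax.le_of_ge hK (fun d hd => LinearMap.mem_ker.mpr (heCD d hd))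
  have hrangeC : LinearMap.range eC = C := by
    refine le_antisymm ?_ (fun c hc => ⟨c, heCC c hc⟩)
    -- first show range eC ⊓ B₀ = ⊥
    have hrb : LinearMap.range eC ⊓ B₀ = ⊥ := by
      rw [eq_bot_iff]
      intro x hx
      obtain ⟨⟨q, rfl⟩, hx2⟩ := Submodule.mem_inf.mp hx
      rw [Submodule.mem_bot]
      by_contra hne
      have hqD : q ∉ D := by
        intro hqD
        exact hne (heCD q hqD)
      -- (D ⊔ span {q}) ⊓ C ≠ ⊥ by maximality of D
      have hsup : ¬((D ⊔ Submodule.span R {q}) ⊓ C = ⊥) := by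
        intro hbot
        have hle : D ⊔ Submodule.span R {q} ≤ D :=
          hDmax.le_of_ge ⟨hbot, le_trans hB₀D le_sup_left⟩ le_sup_left
        exact hqD (hle (Submodule.mem_sup_right (Submodule.mem_span_singleton_self q)))
      obtain ⟨cc, hccmem, hccne⟩ := Submodule.exists_mem_ne_zero_of_ne_bot hsup
      obtain ⟨hcc1, hcc2⟩ := Submodule.mem_inf.mp hccmem
      obtain ⟨d, hd, y, hy, rfl⟩ := Submodule.mem_sup.mp hcc1
      obtain ⟨r, rfl⟩ := Submodule.mem_span_singleton.mp hy
      have hkey : d + r • q = r • eC q := by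
        have h1 : eC (d + r • q) = d + r • q := heCC _ hcc2
        have h2 : eC (d + r • q) = r • eC q := by
          rw [map_add, map_smul, heCD d hd, zero_add]
        rw [← h1, h2]
      have hccB₀ : d + r • q ∈ B₀ := by
        rw [hkey]
        exact Submodule.smul_mem _ r hx2
      have : d + r • q ∈ C ⊓ B₀ := Submodule.mem_inf.mpr ⟨hcc2, hccB₀⟩
      rw [hCB₀] at this
      exact hccne ((Submodule.mem_bot R).mp this)
    -- maximality of C
    have hCle : C ≤ LinearMap.range eC := fun c hc => ⟨c, heCC c hc⟩
    exact hCmax.le_of_ge hrb hCle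
  -- projection onto D
  have hsubD : ∀ q : Q, q - eC q ∈ D := by
    intro q
    rw [← hkerD, LinearMap.mem_ker, map_sub, sub_eq_zero]
    exact (heCC (eC q) (hrangeC ▸ ⟨q, rfl⟩)).symm
  -- essentiality of B₀ in D
  have hess : ∀ x ∈ D, x ≠ 0 → ∃ r : R, r • x ∈ B₀ ∧ r • x ≠ 0 := by
    intro x hxD hxne
    have hxC : x ∉ C := by
      intro hxC
      have : x ∈ D ⊓ C := Submodule.mem_inf.mpr ⟨hxD, hxC⟩
      rw [hDC] at this
      exact hxne ((Submodule.mem_bot R).mp this)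
    have hsup : ¬((C ⊔ Submodule.span R {x}) ⊓ B₀ = ⊥) := by
      intro hbot
      have hle : C ⊔ Submodule.span R {x} ≤ C := hCmax.le_of_ge hbot le_sup_left
      exact hxC (hle (Submodule.mem_sup_right (Submodule.mem_span_singleton_self x)))
    obtain ⟨b, hbmem, hbne⟩ := Submodule.exists_mem_ne_zero_of_ne_bot hsup
    obtain ⟨hb1, hb2⟩ := Submodule.mem_inf.mp hbmem
    obtain ⟨cc, hcc, y, hy, rfl⟩ := Submodule.mem_sup.mp hb1
    obtain ⟨r, rfl⟩ := Submodule.mem_span_singleton.mp hy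
    have hccD : cc ∈ D := by
      have h1 : cc = (cc + r • x) - r • x := by abel
      rw [h1]
      exact Submodule.sub_mem _ (hB₀D hb2) (Submodule.smul_mem _ r hxD)
    have hcc0 : cc = 0 := by
      have : cc ∈ D ⊓ C := Submodule.mem_inf.mpr ⟨hccD, hcc⟩
      rw [hDC] at this
      exact (Submodule.mem_bot R).mp this
    rw [hcc0, zero_add] at hb2 hbne
    exact ⟨r, hb2, hbne⟩
  -- D is GV-torsion-free (as a subset of Q)
  have hDtf : ∀ x ∈ D, IsGVTorsionElem R x → x = 0 := by
    intro x hxD hxtor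
    by_contra hxne
    obtain ⟨r, hr1, hr2⟩ := hess x hxD hxne
    obtain ⟨J, hJ, h⟩ := hxtor
    refine hr2 (hB₀tf _ hr1 ⟨J, hJ, fun j hj => ?_⟩)
    rw [smul_comm, h j hj, smul_zero]
  -- the w-envelope W of B₀ inside D
  let W : Submodule R Q :=
    { carrier := {x | x ∈ D ∧ ∃ J : Ideal R, IsGVIdeal R J ∧ ∀ j ∈ J, j • x ∈ B₀}
      add_mem' := by
        rintro x y ⟨hxD, J₁, hJ₁, h₁⟩ ⟨hyD, J₂, hJ₂, h₂⟩
        refine ⟨D.add_mem hxD hyD, J₁ * J₂, hJ₁.mul hJ₂, fun j hj => ?_⟩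
        rw [smul_add]
        exact Submodule.add_mem _ (h₁ j (Ideal.mul_le_left hj))
          (h₂ j (Ideal.mul_le_right hj))
      zero_mem' := ⟨D.zero_mem, ⊤, isGVIdeal_top, fun j _ => by
        rw [smul_zero]; exact Submodule.zero_mem _⟩
      smul_mem' := by
        rintro c x ⟨hxD, J, hJ, h⟩
        refine ⟨D.smul_mem c hxD, J, hJ, fun j hj => ?_⟩
        rw [smul_comm]
        exact Submodule.smul_mem _ c (h j hj) }
  have hB₀W : B₀ ≤ W := by
    intro x hx
    exact ⟨hB₀D hx, ⊤, isGVIdeal_top, fun j _ => Submodule.smul_mem _ j hx⟩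
  have hWD : ∀ x ∈ W, x ∈ D := fun x hx => hx.1
  refine ⟨↥W, inferInstance, inferInstance,
    LinearMap.codRestrict W i₀ (fun b => hB₀W ⟨b, rfl⟩), ⟨?_, ?_⟩, ?_, ?_⟩
  · -- GV-torsion-free
    rintro x ⟨J, hJ, h⟩
    have hcoe : IsGVTorsionElem R (x : Q) := ⟨J, hJ, fun j hj => by
      have := congrArg Subtype.val (h j hj)
      simpa only [Submodule.coe_smul, Submodule.coe_zero] using this⟩
    exact Subtype.ext (hDtf _ (hWD _ x.2) hcoe)
  · -- extension property
    intro J hJ f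
    obtain ⟨h, hh⟩ := hQinj.out J.subtype (Submodule.injective_subtype J) (W.subtype ∘ₗ f)
    set x₀ := h 1 with hx₀def
    have hact : ∀ j : ↥J, (j : R) • x₀ = (f j : Q) := by
      intro j
      have h1 : (j : R) • x₀ = h ((j : R) • 1) := (map_smul h _ _).symm
      rw [smul_eq_mul, mul_one] at h1
      rw [h1]
      exact hh j
    set x : Q := x₀ - eC x₀ with hxdef
    have hxD : x ∈ D := hsubD x₀
    have hactx : ∀ j : ↥J, (j : R) • x = (f j : Q) := by
      intro j
      rw [hxdef, smul_sub, hact j, ← map_smul, hact j,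
        show eC ((f j : Q)) = 0 from heCD _ (hWD _ (f j).2), sub_zero]
    have hxW : x ∈ W := by
      refine ⟨hxD, ?_⟩
      obtain ⟨sJ, hsJ⟩ := hJ.1
      have hWf : ∀ a : ↥J, ∃ Ja : Ideal R, IsGVIdeal R Ja ∧
          ∀ k ∈ Ja, k • ((a : R) • x) ∈ B₀ := by
        intro a
        obtain ⟨_, Ja, hJa, h2⟩ := (f a).2
        exact ⟨Ja, hJa, fun k hk => by rw [hactx a]; exact h2 k hk⟩
      choose Jf hJf1 hJf2 using hWf
      have hmemJ : ∀ a : ↥sJ, (a : R) ∈ J := fun a => by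
        rw [← hsJ]; exact Ideal.subset_span a.2
      set K : Ideal R := ∏ a ∈ sJ.attach, Jf ⟨a, hmemJ a⟩ with hKdef
      have hK : IsGVIdeal R K := isGVIdeal_finset_prod _ _ (fun a _ => hJf1 _)
      refine ⟨K * J, hK.mul hJ, ?_⟩
      intro k hk
      refine Submodule.mul_induction_on' (C := fun y _ => y • x ∈ B₀) ?_ ?_ hk
      · intro m hm n hn
        rw [← hsJ] at hn
        refine Submodule.span_induction ?_ ?_ ?_ ?_ hn
        · intro a ha
          have hKle : K ≤ Jf ⟨a, hmemJ ⟨a, ha⟩⟩ :=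
            finset_prod_le _ (Finset.mem_attach _ ⟨a, ha⟩)
          have h4 := hJf2 ⟨a, hmemJ ⟨a, ha⟩⟩ m (hKle hm)
          rw [mul_smul]
          exact h4
        · rw [mul_zero, zero_smul]; exact Submodule.zero_mem _
        · intro y z _ _ hy hz
          rw [mul_add, add_smul]; exact Submodule.add_mem _ hy hz
        · intro r y _ hy
          have h3 : (m * (r • y)) • x = r • ((m * y) • x) := by
            rw [smul_eq_mul, show m * (r * y) = r * (m * y) by ring, mul_smul]
          rw [h3]
          exact Submodule.smul_mem _ r hy
      · intro y hy z hz hy' hz'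
        rw [add_smul]; exact Submodule.add_mem _ hy' hz'
    refine ⟨LinearMap.codRestrict W (LinearMap.toSpanSingleton R Q x)
      (fun r => by
        rw [LinearMap.toSpanSingleton_apply]; exact Submodule.smul_mem _ r hxW), fun j => ?_⟩
    exact Subtype.ext (by
      rw [LinearMap.codRestrict_apply, LinearMap.toSpanSingleton_apply]
      exact hactx j)
  · -- injectivity of i
    intro a b hab
    exact hi₀ (congrArg Subtype.val hab)
  · -- envelope property
    intro w
    obtain ⟨hwD, J, hJ, h⟩ := w.2
    refine ⟨J, hJ, fun j hj => ?_⟩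
    obtain ⟨b, hb⟩ := h j hj
    refine ⟨b, Subtype.ext ?_⟩
    rw [LinearMap.codRestrict_apply]
    exact hb.trans (by simp)

end Helpers4


/-- w-version of Ishikawa's Theorem 3.1: for a GV-torsion-free injective
`R`-module `E`, TFAE:
(1) `Hom_R(A, E) ≠ 0` for every nonzero w-module `A`;
(2) `Hom_R(B, E) ≠ 0` for every nonzero GV-torsion-free module `B`;
(3) `Hom_R(R/I, E) ≠ 0` for every proper w-ideal `I`;
(4) `Hom_R(R/m, E) ≠ 0` for every maximal w-ideal `m`. -/
theorem wFaithfullyInjective_tfae (R : Type u) [CommRing R] (E : Type u)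
    [AddCommGroup E] [Module R E] (htf : IsGVTorsionFree R E)
    (hinj : Module.Injective R E) :
    List.TFAE [
      ∀ (A : Type u) [AddCommGroup A] [Module R A], IsWModule R A → Nontrivial A →
        ∃ f : A →ₗ[R] E, f ≠ 0,
      ∀ (B : Type u) [AddCommGroup B] [Module R B], IsGVTorsionFree R B → Nontrivial B →
        ∃ f : B →ₗ[R] E, f ≠ 0,
      ∀ I : Ideal R, IsWIdeal R I → I ≠ ⊤ → ∃ f : (R ⧸ I) →ₗ[R] E, f ≠ 0,
      ∀ m : Ideal R, IsMaxWIdeal R m → ∃ f : (R ⧸ m) →ₗ[R] E, f ≠ 0 ] := by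
  tfae_have 2 → 1 := by
    intro h2 A _ _ hA hnt
    exact h2 A hA.1 hnt
  tfae_have 2 → 3 := by
    intro h2 I hIw hIne
    refine h2 (R ⧸ I) (quotient_gvtf hIw) ?_
    refine ⟨Submodule.Quotient.mk 1, 0, fun h => hIne ?_⟩
    exact (Ideal.eq_top_iff_one I).mpr ((Submodule.Quotient.mk_eq_zero I).mp h)
  tfae_have 3 → 4 := fun h3 m hm => h3 m hm.1 hm.2.1
  tfae_have 4 → 2 := by
    intro h4 B _ _ hB hnt
    exact exists_hom_of_maxW hinj h4 B hB hnt
  tfae_have 1 → 2 := by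
    intro h1 B _ _ hB hnt
    obtain ⟨W, _, _, i, hW, hi, henv⟩ := exists_wEnvelope R B hB
    obtain ⟨b, hb⟩ := exists_ne (0 : B)
    have hntW : Nontrivial W := ⟨i b, 0, fun h => hb (hi (by rw [h, map_zero]))⟩
    obtain ⟨f, hf⟩ := h1 W hW hntW
    refine ⟨f ∘ₗ i, fun h0 => hf ?_⟩
    refine LinearMap.ext fun w => ?_
    rw [LinearMap.zero_apply]
    obtain ⟨J, hJ, h⟩ := henv w
    refine htf (f w) ⟨J, hJ, fun j hj => ?_⟩
    obtain ⟨bj, hbj⟩ := h j hj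
    calc j • f w = f (j • w) := (map_smul f j w).symm
      _ = f (i bj) := by rw [hbj]
      _ = 0 := by
        have := congrFun (congrArg DFunLike.coe h0) bj
        simpa using this
  tfae_finish
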